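/- Let a, b, m be integers with 0 ≤ a ≤ b ≤ m and let G(t) = (b−a)! / (t+a)_{b−a+1}. Then for every integer k with 0 ≤ k ≤ m and every integer λ ≥ 0, the rational number D_m^λ · (1/λ!) · (G(t)·(t+k))^{(λ)}|_{t=−k} is an integer, where the superscript (λ) denotes the λ-th derivative. -/

import Mathlib

/-- The Pochhammer symbol `(x)ₖ = x(x+1)⋯(x+k-1)` for a real `x`. -/
noncomputable def poch (x : ℝ) (k : ℕ) : ℝ := ∏ m ∈ Finset.range k, (x + m)

open Finset

/-- Partial fraction decomposition with integer coefficients. -/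
lemma pf_aux (n : ℕ) : ∀ a : ℕ, ∃ c : ℕ → ℤ, ∀ t : ℝ,
    (∀ j ∈ Finset.range (n+1), t + ((a + j : ℕ) : ℝ) ≠ 0) →
    (n.factorial : ℝ) * (∏ j ∈ Finset.range (n+1), (t + ((a + j : ℕ) : ℝ)))⁻¹ =
      ∑ j ∈ Finset.range (n+1), (c j : ℝ) * (t + ((a + j : ℕ) : ℝ))⁻¹ := by
  induction n with
  | zero =>
    intro a
    exact ⟨fun _ => 1, by intro t ht; simp⟩
  | succ n ih =>
    intro a
    obtain ⟨c1, hc1⟩ := ih a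
    obtain ⟨c2, hc2⟩ := ih (a+1)
    refine ⟨fun j => (if j < n+1 then c1 j else 0) - (if j = 0 then 0 else c2 (j-1)), ?_⟩
    intro t ht
    have hne : ∀ j ∈ Finset.range (n+2), t + ((a + j : ℕ) : ℝ) ≠ 0 := ht
    have hsub1 : ∀ j ∈ Finset.range (n+1), t + ((a + j : ℕ) : ℝ) ≠ 0 :=
      fun j hj => hne j (Finset.mem_range.2 (lt_trans (Finset.mem_range.1 hj) (Nat.lt_succ_self _)))
    have hsub2 : ∀ j ∈ Finset.range (n+1), t + ((a + 1 + j : ℕ) : ℝ) ≠ 0 := by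
      intro j hj
      have h0 := hne (j+1) (by simp only [Finset.mem_range] at hj ⊢; omega)
      convert h0 using 2
      push_cast; ring
    have hP1ne : (∏ j ∈ Finset.range (n+1), (t + ((a + j : ℕ) : ℝ))) ≠ 0 :=
      Finset.prod_ne_zero_iff.2 hsub1
    have hP2ne : (∏ j ∈ Finset.range (n+1), (t + ((a + 1 + j : ℕ) : ℝ))) ≠ 0 :=
      Finset.prod_ne_zero_iff.2 hsub2
    have hQne : (∏ j ∈ Finset.range (n+2), (t + ((a + j : ℕ) : ℝ))) ≠ 0 :=
      Finset.prod_ne_zero_iff.2 hne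
    have hX : t + ((a + (n+1) : ℕ) : ℝ) ≠ 0 := hne (n+1) (Finset.mem_range.2 (Nat.lt_succ_self _))
    have hQ1 : (∏ j ∈ Finset.range (n+2), (t + ((a + j : ℕ) : ℝ)))
        = (∏ j ∈ Finset.range (n+1), (t + ((a + j : ℕ) : ℝ))) * (t + ((a + (n+1) : ℕ) : ℝ)) :=
      Finset.prod_range_succ _ _
    have hQ2 : (∏ j ∈ Finset.range (n+2), (t + ((a + j : ℕ) : ℝ)))
        = (t + ((a : ℕ) : ℝ)) * (∏ j ∈ Finset.range (n+1), (t + ((a + 1 + j : ℕ) : ℝ))) := by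
      have e1 : (t + ((a + 0 : ℕ) : ℝ)) = t + ((a : ℕ) : ℝ) := by norm_num
      have e2 : ∏ i ∈ Finset.range (n+1), (t + ((a + (i+1) : ℕ) : ℝ))
          = ∏ j ∈ Finset.range (n+1), (t + ((a + 1 + j : ℕ) : ℝ)) :=
        Finset.prod_congr rfl fun j _ => by push_cast; ring
      rw [Finset.prod_range_succ', e2, e1, mul_comm]
    -- inverse identities
    have hinv1 : (∏ j ∈ Finset.range (n+1), (t + ((a + j : ℕ) : ℝ)))⁻¹
        = (t + ((a + (n+1) : ℕ) : ℝ)) * (∏ j ∈ Finset.range (n+2), (t + ((a + j : ℕ) : ℝ)))⁻¹ := by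
      rw [hQ1, mul_inv]
      rw [mul_comm ((∏ j ∈ Finset.range (n+1), (t + ((a + j : ℕ) : ℝ)))⁻¹), ← mul_assoc,
        mul_inv_cancel₀ hX, one_mul]
    have hinv2 : (∏ j ∈ Finset.range (n+1), (t + ((a + 1 + j : ℕ) : ℝ)))⁻¹
        = (t + ((a : ℕ) : ℝ)) * (∏ j ∈ Finset.range (n+2), (t + ((a + j : ℕ) : ℝ)))⁻¹ := by
      rw [hQ2, mul_inv]
      have hY : t + ((a : ℕ) : ℝ) ≠ 0 := by
        have := hne 0 (Finset.mem_range.2 (Nat.succ_pos _)); simpa using this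
      rw [← mul_assoc, mul_inv_cancel₀ hY, one_mul]
    -- sum side
    have hS1 : ∑ j ∈ Finset.range (n+2),
        ((if j < n+1 then c1 j else 0 : ℤ) : ℝ) * (t + ((a + j : ℕ) : ℝ))⁻¹
        = (n.factorial : ℝ) * (∏ j ∈ Finset.range (n+1), (t + ((a + j : ℕ) : ℝ)))⁻¹ := by
      rw [Finset.sum_range_succ, if_neg (lt_irrefl (n+1)), Int.cast_zero, zero_mul, add_zero]
      rw [hc1 t hsub1]
      refine Finset.sum_congr rfl (fun j hj => ?_)
      rw [if_pos (Finset.mem_range.1 hj)]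
    have hS2 : ∑ j ∈ Finset.range (n+2),
        ((if j = 0 then 0 else c2 (j-1) : ℤ) : ℝ) * (t + ((a + j : ℕ) : ℝ))⁻¹
        = (n.factorial : ℝ) * (∏ j ∈ Finset.range (n+1), (t + ((a + 1 + j : ℕ) : ℝ)))⁻¹ := by
      rw [Finset.sum_range_succ'
        (fun j => ((if j = 0 then 0 else c2 (j-1) : ℤ) : ℝ) * (t + ((a + j : ℕ) : ℝ))⁻¹) (n+1)]
      simp only [if_true, ite_true, Int.cast_zero, zero_mul, add_zero]
      rw [hc2 t hsub2]
      refine Finset.sum_congr rfl (fun j hj => ?_)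
      rw [show a + (j+1) = a + 1 + j from by omega]
      simp
    have hsplit : ∑ j ∈ Finset.range (n+2),
        (((if j < n+1 then c1 j else 0) - (if j = 0 then 0 else c2 (j-1)) : ℤ) : ℝ) *
          (t + ((a + j : ℕ) : ℝ))⁻¹
        = (n.factorial : ℝ) * (∏ j ∈ Finset.range (n+1), (t + ((a + j : ℕ) : ℝ)))⁻¹
          - (n.factorial : ℝ) * (∏ j ∈ Finset.range (n+1), (t + ((a + 1 + j : ℕ) : ℝ)))⁻¹ := by
      rw [← hS1, ← hS2, ← Finset.sum_sub_distrib]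
      refine Finset.sum_congr rfl (fun j _ => by push_cast; ring)
    rw [hsplit, hinv1, hinv2, Nat.factorial_succ]
    have : ((a + (n+1) : ℕ) : ℝ) = (a : ℝ) + n + 1 := by push_cast; ring
    rw [this]
    push_cast
    ring

lemma iter_deriv_inv_sum (S : Finset ℕ) (C : ℝ) (e r : ℕ → ℝ) (lam : ℕ) :
    ∀ x : ℝ, (∀ j ∈ S, x + r j ≠ 0) →
    iteratedDeriv lam (fun t => C + ∑ j ∈ S, e j * (t + r j)⁻¹) x =
      (if lam = 0 then C else 0) +
        ∑ j ∈ S, e j * (-1 : ℝ) ^ lam * lam.factorial * ((x + r j) ^ (lam+1))⁻¹ := by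
  induction lam with
  | zero =>
    intro x hx
    simp [iteratedDeriv_zero]
  | succ lam ih =>
    intro x hx
    rw [iteratedDeriv_succ]
    have hopen : IsOpen {t : ℝ | ∀ j ∈ S, t + r j ≠ 0} := by
      have : {t : ℝ | ∀ j ∈ S, t + r j ≠ 0} = ⋂ j ∈ S, {t : ℝ | t + r j ≠ 0} := by
        ext t; simp
      rw [this]
      refine isOpen_biInter_finset (fun j _ => ?_)
      exact isOpen_compl_singleton.preimage (continuous_id.add continuous_const)
    have hev : iteratedDeriv lam (fun t => C + ∑ j ∈ S, e j * (t + r j)⁻¹) =ᶠ[nhds x]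
        (fun t => (if lam = 0 then C else 0) +
          ∑ j ∈ S, e j * (-1 : ℝ) ^ lam * lam.factorial * ((t + r j) ^ (lam+1))⁻¹) :=
      Filter.eventually_of_mem (hopen.mem_nhds hx) (fun t ht => ih t ht)
    rw [hev.deriv_eq]
    have hd : ∀ j ∈ S, HasDerivAt
        (fun t : ℝ => e j * (-1 : ℝ) ^ lam * lam.factorial * ((t + r j) ^ (lam+1))⁻¹)
        (e j * (-1 : ℝ) ^ lam * lam.factorial * (-(lam+1) * ((x + r j) ^ (lam+2))⁻¹)) x := by
      intro j hj
      have h1 : HasDerivAt (fun t : ℝ => t + r j) 1 x := (hasDerivAt_id x).add_const (r j)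
      have h2 : HasDerivAt (fun t : ℝ => (t + r j) ^ (lam+1)) ((lam+1) * (x + r j) ^ lam * 1) x := by
        simpa using h1.fun_pow (lam+1)
      have h3 := h2.inv (pow_ne_zero (lam+1) (hx j hj))
      have h4 := h3.const_mul (e j * (-1 : ℝ) ^ lam * lam.factorial)
      have hxj := hx j hj
      have heq : e j * (-1 : ℝ) ^ lam * (lam.factorial : ℝ) *
          (-((↑lam + 1) * (x + r j) ^ lam * 1) / ((x + r j) ^ (lam + 1)) ^ 2)
          = e j * (-1 : ℝ) ^ lam * (lam.factorial : ℝ) *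
            (-(↑lam + 1) * ((x + r j) ^ (lam + 2))⁻¹) := by
        field_simp
        ring
      rw [← heq]
      exact h4
    have hsum : HasDerivAt
        (fun t : ℝ => (if lam = 0 then C else 0) +
          ∑ j ∈ S, e j * (-1 : ℝ) ^ lam * lam.factorial * ((t + r j) ^ (lam+1))⁻¹)
        (∑ j ∈ S, e j * (-1 : ℝ) ^ lam * lam.factorial * (-(lam+1) * ((x + r j) ^ (lam+2))⁻¹)) x := by
      have := HasDerivAt.sum hd
      simpa using this.const_add (if lam = 0 then C else 0)
    rw [hsum.deriv]
    rw [if_neg (Nat.succ_ne_zero lam), zero_add]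
    refine Finset.sum_congr rfl (fun j hj => ?_)
    rw [Nat.factorial_succ]
    push_cast
    ring

/-- **Lemma (denominator-type elementary bricks, integrality).** Let `0 ≤ a ≤ b ≤ m` and
`G(t) = (b-a)! / (t+a)_{b-a+1}`. For `0 ≤ k ≤ m` and `λ ≥ 0`, the value at `t = -k` of the λ-th
derivative of (the regular extension `h` of) `G(t)·(t+k)`, multiplied by `D_m^λ / λ!`, is an
integer. Here `h` is any function continuous at `-k` agreeing with `G(t)(t+k)` away from `-k`. -/
theorem brick_denominator_integrality (a b m : ℕ) (hab : a ≤ b) (hbm : b ≤ m)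
    (k : ℕ) (hk : k ≤ m) (lam : ℕ) (h : ℝ → ℝ)
    (hagree : ∀ t : ℝ, t ≠ -(k : ℝ) →
      h t = ((b - a).factorial : ℝ) * (t + k) / poch (t + a) (b - a + 1))
    (hcont : ContinuousAt h (-(k : ℝ))) :
    ∃ z : ℤ,
      (((Finset.Icc 1 m).lcm id : ℕ) : ℝ) ^ lam * (1 / (lam.factorial : ℝ)) *
        iteratedDeriv lam h (-(k : ℝ)) = (z : ℝ) := by
  classical
  set n := b - a with hn
  set D : ℕ := (Finset.Icc 1 m).lcm id with hD
  obtain ⟨c, hc⟩ := pf_aux n a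
  set S : Finset ℕ := (Finset.range (n+1)).filter (fun j => a + j ≠ k) with hS
  set r : ℕ → ℝ := fun j => ((a + j : ℕ) : ℝ) with hr
  set e : ℕ → ℝ := fun j => (c j : ℝ) * ((k : ℝ) - ((a + j : ℕ) : ℝ)) with he
  set C : ℝ := ∑ j ∈ Finset.range (n+1), (c j : ℝ) with hC
  -- the regular extension
  have hrk : ∀ j ∈ S, -(k : ℝ) + r j ≠ 0 := by
    intro j hj
    have hjk : a + j ≠ k := (Finset.mem_filter.1 hj).2
    have : ((a + j : ℕ) : ℝ) ≠ (k : ℝ) := fun hh => hjk (Nat.cast_injective hh)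
    simp only [hr]
    intro h0
    exact this (by linarith)
  have hVopen : IsOpen {t : ℝ | ∀ j ∈ S, t + r j ≠ 0} := by
    have : {t : ℝ | ∀ j ∈ S, t + r j ≠ 0} = ⋂ j ∈ S, {t : ℝ | t + r j ≠ 0} := by
      ext t; simp
    rw [this]
    refine isOpen_biInter_finset (fun j _ => ?_)
    exact isOpen_compl_singleton.preimage (continuous_id.add continuous_const)
  have hmem : -(k : ℝ) ∈ {t : ℝ | ∀ j ∈ S, t + r j ≠ 0} := hrk
  -- pointwise identity away from -k
  have hHF : ∀ t : ℝ, (∀ j ∈ S, t + r j ≠ 0) → t ≠ -(k : ℝ) →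
      h t = C + ∑ j ∈ S, e j * (t + r j)⁻¹ := by
    intro t htV htne
    have htk : t + (k : ℝ) ≠ 0 := fun h0 => htne (by linarith)
    have hall : ∀ j ∈ Finset.range (n+1), t + ((a + j : ℕ) : ℝ) ≠ 0 := by
      intro j hj
      by_cases hjk : a + j = k
      · rw [hjk]; exact htk
      · exact htV j (Finset.mem_filter.2 ⟨hj, hjk⟩)
    have hpoch : poch (t + (a : ℝ)) (n+1) = ∏ j ∈ Finset.range (n+1), (t + ((a + j : ℕ) : ℝ)) := by
      unfold poch
      refine Finset.prod_congr rfl (fun j _ => by push_cast; ring)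
    have hPne : (∏ j ∈ Finset.range (n+1), (t + ((a + j : ℕ) : ℝ))) ≠ 0 :=
      Finset.prod_ne_zero_iff.2 hall
    have hbn : b - a + 1 = n + 1 := rfl
    rw [hagree t htne, hbn, hpoch]
    have : ((n.factorial : ℝ)) * (t + (k : ℝ)) /
        (∏ j ∈ Finset.range (n+1), (t + ((a + j : ℕ) : ℝ)))
        = (t + (k : ℝ)) * ((n.factorial : ℝ) *
          (∏ j ∈ Finset.range (n+1), (t + ((a + j : ℕ) : ℝ)))⁻¹) := by
      rw [div_eq_mul_inv]; ring
    rw [this, hc t hall, Finset.mul_sum]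
    have hterm : ∀ j ∈ Finset.range (n+1),
        (t + (k : ℝ)) * ((c j : ℝ) * (t + ((a + j : ℕ) : ℝ))⁻¹)
        = (c j : ℝ) + (if a + j ≠ k then e j * (t + r j)⁻¹ else 0) := by
      intro j hj
      by_cases hjk : a + j = k
      · rw [if_neg (by simpa using hjk)]
        have : ((a + j : ℕ) : ℝ) = (k : ℝ) := by rw [hjk]
        rw [this, add_zero, mul_comm ((c j : ℝ)), ← mul_assoc, mul_inv_cancel₀ htk, one_mul]
      · rw [if_pos hjk]
        have hne' : t + ((a + j : ℕ) : ℝ) ≠ 0 := hall j hj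
        simp only [he, hr]
        push_cast at hne' ⊢
        field_simp
        ring
    rw [Finset.sum_congr rfl hterm, Finset.sum_add_distrib, ← hC]
    congr 1
    rw [hS, Finset.sum_filter]
  -- continuity of the extension and value at -k
  have hdiffF : DifferentiableAt ℝ (fun t : ℝ => C + ∑ j ∈ S, e j * (t + r j)⁻¹) (-(k : ℝ)) := by
    refine (DifferentiableAt.fun_sum (fun j hj => ?_)).const_add C
    exact ((differentiableAt_id.add_const (r j)).inv (hrk j hj)).const_mul (e j)
  have hFk : h (-(k : ℝ)) = C + ∑ j ∈ S, e j * (-(k : ℝ) + r j)⁻¹ := by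
    have T1 : Filter.Tendsto h (nhdsWithin (-(k : ℝ)) {(-(k : ℝ))}ᶜ) (nhds (h (-(k : ℝ)))) :=
      hcont.continuousWithinAt.tendsto
    have T2 : Filter.Tendsto (fun t : ℝ => C + ∑ j ∈ S, e j * (t + r j)⁻¹)
        (nhdsWithin (-(k : ℝ)) {(-(k : ℝ))}ᶜ)
        (nhds (C + ∑ j ∈ S, e j * (-(k : ℝ) + r j)⁻¹)) :=
      hdiffF.continuousAt.continuousWithinAt.tendsto
    have hev' : h =ᶠ[nhdsWithin (-(k : ℝ)) {(-(k : ℝ))}ᶜ]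
        (fun t : ℝ => C + ∑ j ∈ S, e j * (t + r j)⁻¹) := by
      filter_upwards [self_mem_nhdsWithin,
        mem_nhdsWithin_of_mem_nhds (hVopen.mem_nhds hmem)] with t ht1 ht2
      exact hHF t ht2 ht1
    have T1' := T2.congr' hev'.symm
    exact tendsto_nhds_unique T1 T1'
  have hevN : h =ᶠ[nhds (-(k : ℝ))] (fun t : ℝ => C + ∑ j ∈ S, e j * (t + r j)⁻¹) := by
    filter_upwards [hVopen.mem_nhds hmem] with t ht
    by_cases htk : t = -(k : ℝ)
    · rw [htk]; exact hFk
    · exact hHF t ht htk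
  rw [Filter.EventuallyEq.iteratedDeriv_eq lam hevN,
    iter_deriv_inv_sum S C e r lam (-(k : ℝ)) hrk]
  -- arithmetic
  set d : ℕ → ℤ := fun j => (a : ℤ) + j - k with hd
  have hdvd : ∀ j ∈ S, d j ∣ (D : ℤ) := by
    intro j hj
    obtain ⟨hj1, hj2⟩ := Finset.mem_filter.1 hj
    have hjn : j ≤ n := Nat.lt_succ_iff.1 (Finset.mem_range.1 hj1)
    have habs : (d j).natAbs ∈ Finset.Icc 1 m := by
      simp only [Finset.mem_Icc, hd]
      omega
    have h2 : (d j).natAbs ∣ D := Finset.dvd_lcm habs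
    exact Int.natAbs_dvd.1 (Int.natCast_dvd_natCast.2 h2)
  refine ⟨(if lam = 0 then ∑ j ∈ Finset.range (n+1), c j else 0)
    - (-1) ^ lam * ∑ j ∈ S, c j * ((D : ℤ) / d j) ^ lam, ?_⟩
  have hfacne : (lam.factorial : ℝ) ≠ 0 := Nat.cast_ne_zero.2 (Nat.factorial_pos lam).ne'
  have hterm2 : ∀ j ∈ S,
      (D : ℝ) ^ lam * (1 / (lam.factorial : ℝ)) *
        (e j * (-1 : ℝ) ^ lam * lam.factorial * ((-(k : ℝ) + r j) ^ (lam+1))⁻¹)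
      = -((-1 : ℝ) ^ lam * ((c j : ℝ) * (((D : ℤ) / d j : ℤ) : ℝ) ^ lam)) := by
    intro j hj
    have hdR : ((d j : ℤ) : ℝ) = -(k : ℝ) + r j := by
      simp only [hd, hr]; push_cast; ring
    have hdne : ((d j : ℤ) : ℝ) ≠ 0 := by rw [hdR]; exact hrk j hj
    have hqcast : (((D : ℤ) / d j : ℤ) : ℝ) = (D : ℝ) / ((d j : ℤ) : ℝ) :=
      Int.cast_div_charZero (hdvd j hj)
    have hkr : (k : ℝ) - ((a + j : ℕ) : ℝ) = -((d j : ℤ) : ℝ) := by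
      simp only [hd]; push_cast; ring
    rw [← hdR, hqcast]
    simp only [he, hkr]
    field_simp
    rw [div_pow, mul_div_assoc', eq_comm, neg_inj, div_eq_iff (pow_ne_zero _ hdne)]
    ring
  rw [Finset.mul_sum, mul_add, Finset.mul_sum, Finset.sum_congr rfl hterm2]
  have hif : ((D : ℝ) ^ lam * (1 / (lam.factorial : ℝ)) * if lam = 0 then C else 0)
      = (if lam = 0 then C else 0) := by
    by_cases hlam : lam = 0 <;> simp [hlam]
  rw [hif]
  push_cast [apply_ite (fun z : ℤ => (z : ℝ))]
  rw [hC, sub_eq_add_neg, ← Finset.sum_neg_distrib]
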